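/- Let Q be the cyclic quiver of length ℓ ≥ 1 (affine type A) and let u ∈ ℕ^{Q₀}. Then there exist nonempty connected subsets I₁, …, I_m ⊆ Q₀ such that u = Σ_{α=1}^m e_{I_α} and e_{I_α}·C_Q·e_{I_β} ≥ 0 for every pair 1 ≤ α, β ≤ m. -/

import Mathlib

open Matrix

noncomputable section

/-- The underlying graph of the cyclic quiver of length `ℓ` (vertex set `ℤ/ℓ`, one arrow
`i → i+1` for each `i`), as a simple graph (loops and edge multiplicities do not matter
for connectivity). -/
def cyclicGraph (ℓ : ℕ) : SimpleGraph (ZMod ℓ) where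
  Adj i j := i ≠ j ∧ (j = i + 1 ∨ i = j + 1)
  symm := by
    refine ⟨fun i j h => ?_⟩
    exact ⟨h.1.symm, h.2.symm⟩
  loopless := ⟨fun i h => h.1 rfl⟩

/-- A nonempty subset `I` of the vertices of the cyclic quiver is connected if the full
subgraph induced on `I` is connected. -/
def CyclicConnected (ℓ : ℕ) (I : Finset (ZMod ℓ)) : Prop :=
  ((cyclicGraph ℓ).induce (I : Set (ZMod ℓ))).Connected

/-- The Cartan matrix `C_Q = 2·Id - A - Aᵀ` of the cyclic quiver of length `ℓ`. -/
def cyclicCartan (ℓ : ℕ) : Matrix (ZMod ℓ) (ZMod ℓ) ℤ := fun i j =>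
  2 * (if i = j then 1 else 0) - (if j = i + 1 then 1 else 0) - (if i = j + 1 then 1 else 0)

/-- The indicator vector `e_I = ∑_{i ∈ I} e_i` of a subset of vertices. -/
def eInd (ℓ : ℕ) (I : Finset (ZMod ℓ)) : ZMod ℓ → ℤ := fun i => if i ∈ I then 1 else 0

/- ### Auxiliary lemmas -/

lemma pairing_eq (ℓ : ℕ) [NeZero ℓ] (A B : Finset (ZMod ℓ)) :
    eInd ℓ A ⬝ᵥ (cyclicCartan ℓ).mulVec (eInd ℓ B) =
      2 * ((A.filter (fun i => i ∈ B)).card : ℤ)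
        - ((A.filter (fun i => i + 1 ∈ B)).card : ℤ)
        - ((B.filter (fun j => j + 1 ∈ A)).card : ℤ) := by
  classical
  have h1 : eInd ℓ A ⬝ᵥ (cyclicCartan ℓ).mulVec (eInd ℓ B)
      = ∑ i ∈ A, ∑ j ∈ B, cyclicCartan ℓ i j := by
    simp only [dotProduct, mulVec, eInd, ite_mul, one_mul, zero_mul,
      mul_ite, mul_one, mul_zero]
    rw [Finset.sum_ite_mem, Finset.univ_inter]
    exact Finset.sum_congr rfl fun i _ => by
      rw [Finset.sum_ite_mem, Finset.univ_inter]
  rw [h1]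
  unfold cyclicCartan
  simp only [Finset.sum_sub_distrib, ← Finset.mul_sum]
  have t1 : ∀ i ∈ A, (∑ j ∈ B, (if i = j then (1:ℤ) else 0)) = if i ∈ B then 1 else 0 :=
    fun i _ => Finset.sum_ite_eq B i (fun _ => (1:ℤ))
  have t2 : ∀ i ∈ A, (∑ j ∈ B, (if j = i + 1 then (1:ℤ) else 0)) = if i + 1 ∈ B then 1 else 0 :=
    fun i _ => Finset.sum_ite_eq' B (i+1) (fun _ => (1:ℤ))
  have t3 : (∑ i ∈ A, ∑ j ∈ B, (if i = j + 1 then (1:ℤ) else 0))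
      = ∑ j ∈ B, (if j + 1 ∈ A then (1:ℤ) else 0) := by
    rw [Finset.sum_comm]
    exact Finset.sum_congr rfl fun j _ => Finset.sum_ite_eq' A (j+1) (fun _ => (1:ℤ))
  rw [Finset.sum_congr rfl t1, Finset.sum_congr rfl t2, t3,
    Finset.sum_boole, Finset.sum_boole, Finset.sum_boole]

lemma pairing_nonneg_subset (ℓ : ℕ) [NeZero ℓ] {A B : Finset (ZMod ℓ)} (h : A ⊆ B) :
    0 ≤ eInd ℓ A ⬝ᵥ (cyclicCartan ℓ).mulVec (eInd ℓ B) := by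
  classical
  rw [pairing_eq]
  have e1 : A.filter (fun i => i ∈ B) = A := Finset.filter_true_of_mem (fun i hi => h hi)
  have e2 : (A.filter (fun i => i + 1 ∈ B)).card ≤ A.card := Finset.card_filter_le _ _
  have e3 : (B.filter (fun j => j + 1 ∈ A)).card ≤ A.card := by
    apply Finset.card_le_card_of_injOn (fun j => j + 1)
    · intro j hj; exact (Finset.mem_filter.mp hj).2
    · intro a _ b _ hab; exact add_right_cancel hab
  rw [e1]
  omega

lemma pairing_nonneg_superset (ℓ : ℕ) [NeZero ℓ] {A B : Finset (ZMod ℓ)} (h : B ⊆ A) :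
    0 ≤ eInd ℓ A ⬝ᵥ (cyclicCartan ℓ).mulVec (eInd ℓ B) := by
  classical
  rw [pairing_eq]
  have e1 : A.filter (fun i => i ∈ B) = B := by
    ext x; simp only [Finset.mem_filter]
    exact ⟨fun hx => hx.2, fun hx => ⟨h hx, hx⟩⟩
  have e2 : (A.filter (fun i => i + 1 ∈ B)).card ≤ B.card := by
    apply Finset.card_le_card_of_injOn (fun j => j + 1)
    · intro j hj; exact (Finset.mem_filter.mp hj).2
    · intro a _ b _ hab; exact add_right_cancel hab
  have e3 : (B.filter (fun j => j + 1 ∈ A)).card ≤ B.card := Finset.card_filter_le _ _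
  rw [e1]
  omega

lemma pairing_nonneg_sep (ℓ : ℕ) [NeZero ℓ] {A B : Finset (ZMod ℓ)}
    (h : ∀ i ∈ A, ∀ j ∈ B, i ≠ j ∧ j ≠ i + 1 ∧ i ≠ j + 1) :
    0 ≤ eInd ℓ A ⬝ᵥ (cyclicCartan ℓ).mulVec (eInd ℓ B) := by
  classical
  rw [pairing_eq]
  have e1 : A.filter (fun i => i ∈ B) = ∅ := by
    apply Finset.filter_eq_empty_iff.mpr
    intro i hi hib; exact (h i hi i hib).1 rfl
  have e2 : A.filter (fun i => i + 1 ∈ B) = ∅ := by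
    apply Finset.filter_eq_empty_iff.mpr
    intro i hi hib; exact (h i hi (i+1) hib).2.1 rfl
  have e3 : B.filter (fun j => j + 1 ∈ A) = ∅ := by
    apply Finset.filter_eq_empty_iff.mpr
    intro j hj hja; exact (h (j+1) hja j hj).2.2 rfl
  rw [e1, e2, e3]
  simp

/- ### Connected components of subsets of the cycle -/

/-- One step of adjacency inside `S`. -/
def stepRel {ℓ : ℕ} (S : Finset (ZMod ℓ)) (a b : ZMod ℓ) : Prop :=
  b ∈ S ∧ (b = a + 1 ∨ a = b + 1)

/-- The connected component of `i0` inside `S`. -/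
def cycComp {ℓ : ℕ} (S : Finset (ZMod ℓ)) (i0 : ZMod ℓ) : Finset (ZMod ℓ) :=
  @Finset.filter _ (fun j => Relation.ReflTransGen (stepRel S) i0 j)
    (Classical.decPred _) S

variable {ℓ : ℕ}

lemma mem_cycComp {S : Finset (ZMod ℓ)} {i0 j : ZMod ℓ} :
    j ∈ cycComp S i0 ↔ j ∈ S ∧ Relation.ReflTransGen (stepRel S) i0 j := by
  exact @Finset.mem_filter _ _ (Classical.decPred _) _ _

lemma cycComp_subset (S : Finset (ZMod ℓ)) (i0 : ZMod ℓ) : cycComp S i0 ⊆ S :=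
  fun _ hj => (mem_cycComp.mp hj).1

lemma mem_cycComp_self {S : Finset (ZMod ℓ)} {i0 : ZMod ℓ} (h : i0 ∈ S) : i0 ∈ cycComp S i0 := by
  exact mem_cycComp.mpr ⟨h, Relation.ReflTransGen.refl⟩

lemma cycComp_closed {S : Finset (ZMod ℓ)} {i0 i j : ZMod ℓ}
    (hi : i ∈ cycComp S i0) (hj : j ∈ S) (hadj : j = i + 1 ∨ i = j + 1) :
    j ∈ cycComp S i0 := by
  rw [mem_cycComp] at hi ⊢
  exact ⟨hj, hi.2.tail ⟨hj, hadj⟩⟩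

lemma cycComp_connected {S : Finset (ZMod ℓ)} {i0 : ZMod ℓ} (h : i0 ∈ S) :
    CyclicConnected ℓ (cycComp S i0) := by
  have hi0 : i0 ∈ cycComp S i0 := mem_cycComp_self h
  have key : ∀ j, Relation.ReflTransGen (stepRel S) i0 j →
      ∃ hj : j ∈ cycComp S i0,
        ((cyclicGraph ℓ).induce ((cycComp S i0 : Finset (ZMod ℓ)) : Set (ZMod ℓ))).Reachable
          ⟨i0, by exact_mod_cast hi0⟩ ⟨j, by exact_mod_cast hj⟩ := by
    intro j hj
    induction hj with
    | refl => exact ⟨hi0, SimpleGraph.Reachable.refl _⟩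
    | @tail b c hb hbc ih =>
      obtain ⟨hbm, hreach⟩ := ih
      have hcm : c ∈ cycComp S i0 := cycComp_closed hbm hbc.1 hbc.2
      refine ⟨hcm, ?_⟩
      by_cases hbceq : b = c
      · subst hbceq
        exact hreach
      · refine hreach.trans (SimpleGraph.Adj.reachable ?_)
        exact ⟨hbceq, hbc.2⟩
  unfold CyclicConnected
  rw [SimpleGraph.connected_iff_exists_forall_reachable]
  refine ⟨⟨i0, by exact_mod_cast hi0⟩, ?_⟩
  rintro ⟨j, hj⟩
  have hjm : j ∈ cycComp S i0 := by exact_mod_cast hj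
  obtain ⟨_, r⟩ := key j (mem_cycComp.mp hjm).2
  exact r

lemma walk_mem_cycComp {S I : Finset (ZMod ℓ)} {i0 : ZMod ℓ} (hIS : I ⊆ S) :
    ∀ {a b : (I : Set (ZMod ℓ))}
      (_ : ((cyclicGraph ℓ).induce (I : Set (ZMod ℓ))).Walk a b),
      (a : ZMod ℓ) ∈ cycComp S i0 → (b : ZMod ℓ) ∈ cycComp S i0 := by
  intro a b w
  induction w with
  | nil => exact id
  | @cons x y z hxy p ih =>
    intro hx
    have hyS : (y : ZMod ℓ) ∈ S := hIS (by exact_mod_cast y.2)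
    have hy : (y : ZMod ℓ) ∈ cycComp S i0 := cycComp_closed hx hyS hxy.2
    exact ih hy

lemma subset_cycComp_of_connected {S I : Finset (ZMod ℓ)} {i0 x : ZMod ℓ}
    (hIS : I ⊆ S) (hconn : CyclicConnected ℓ I) (hxI : x ∈ I) (hxA : x ∈ cycComp S i0) :
    I ⊆ cycComp S i0 := by
  intro y hy
  have hr := hconn.preconnected ⟨x, by exact_mod_cast hxI⟩ ⟨y, by exact_mod_cast hy⟩
  obtain ⟨w⟩ := hr
  exact walk_mem_cycComp hIS w hxA

/- ### Main induction -/

lemma aux_decomp (ℓ : ℕ) [NeZero ℓ] :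
    ∀ N (u : ZMod ℓ → ℕ), (∑ i, u i) = N →
    ∃ (m : ℕ) (Is : Fin m → Finset (ZMod ℓ)),
      (∀ α, (Is α).Nonempty ∧ CyclicConnected ℓ (Is α)) ∧
      (∀ i, (u i : ℤ) = ∑ α, eInd ℓ (Is α) i) ∧
      (∀ α β, 0 ≤ eInd ℓ (Is α) ⬝ᵥ (cyclicCartan ℓ).mulVec (eInd ℓ (Is β))) ∧
      (∀ α, ∀ i ∈ Is α, u i ≠ 0) := by
  intro N
  induction N using Nat.strong_induction_on with
  | _ N IH =>
  intro u hN
  by_cases hz : ∀ i, u i = 0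
  · refine ⟨0, fun α => α.elim0, fun α => α.elim0, ?_, fun α => α.elim0, fun α => α.elim0⟩
    intro i
    simp [hz i]
  · push_neg at hz
    obtain ⟨i0, hi0⟩ := hz
    set S : Finset (ZMod ℓ) := Finset.univ.filter (fun i => u i ≠ 0) with hS
    have hi0S : i0 ∈ S := by simp [hS, hi0]
    set A := cycComp S i0 with hA
    have hAS : A ⊆ S := cycComp_subset S i0
    have hApos : ∀ i ∈ A, u i ≠ 0 := by
      intro i hi
      have h2 := hAS hi
      rw [hS, Finset.mem_filter] at h2
      exact h2.2
    set u' : ZMod ℓ → ℕ := fun i => u i - (if i ∈ A then 1 else 0) with hu'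
    have hdecomp : ∀ i, u i = u' i + (if i ∈ A then 1 else 0) := by
      intro i
      by_cases hi : i ∈ A
      · have := hApos i hi
        simp only [hu', hi, if_true]
        omega
      · simp [hu', hi]
    have hlt : (∑ i, u' i) < N := by
      rw [← hN]
      apply Finset.sum_lt_sum
      · intro i _
        conv_rhs => rw [hdecomp i]
        omega
      · refine ⟨i0, Finset.mem_univ _, ?_⟩
        have h0 : i0 ∈ A := mem_cycComp_self hi0S
        conv_rhs => rw [hdecomp i0]
        simp [h0]
    obtain ⟨m, Is, hIs1, hIs2, hIs3, hIs4⟩ := IH _ hlt u' rfl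
    have hIsS : ∀ β, Is β ⊆ S := by
      intro β i hi
      have h1 : u' i ≠ 0 := hIs4 β i hi
      have h2 : u i ≠ 0 := by
        have := hdecomp i
        omega
      simp [hS, h2]
    have hrel : ∀ β, Is β ⊆ A ∨ (∀ i ∈ A, ∀ j ∈ Is β, i ≠ j ∧ j ≠ i + 1 ∧ i ≠ j + 1) := by
      intro β
      by_cases hint : ∃ x, x ∈ Is β ∧ x ∈ A
      · obtain ⟨x, hx1, hx2⟩ := hint
        exact Or.inl (subset_cycComp_of_connected (hIsS β) (hIs1 β).2 hx1 hx2)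
      · push_neg at hint
        right
        intro i hi j hj
        refine ⟨?_, ?_, ?_⟩
        · rintro rfl
          exact hint i hj hi
        · rintro rfl
          exact hint (i + 1) hj (cycComp_closed hi (hIsS β hj) (Or.inl rfl))
        · intro h
          exact hint j hj (cycComp_closed hi (hIsS β hj) (Or.inr h))
    refine ⟨m + 1, Fin.cons A Is, ?_, ?_, ?_, ?_⟩
    · intro α
      refine Fin.cases ?_ ?_ α
      · simp only [Fin.cons_zero]
        exact ⟨⟨i0, mem_cycComp_self hi0S⟩, cycComp_connected hi0S⟩
      · intro a
        simp only [Fin.cons_succ]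
        exact hIs1 a
    · intro i
      rw [Fin.sum_univ_succ]
      simp only [Fin.cons_zero, Fin.cons_succ]
      have hcast : (u i : ℤ) = (u' i : ℤ) + eInd ℓ A i := by
        rw [hdecomp i]
        push_cast
        unfold eInd
        split <;> simp
      rw [hcast, hIs2 i]
      ring
    · intro α β
      refine Fin.cases ?_ ?_ α
      · refine Fin.cases ?_ ?_ β
        · simp only [Fin.cons_zero]
          exact pairing_nonneg_subset ℓ (le_refl A)
        · intro b
          simp only [Fin.cons_zero, Fin.cons_succ]
          rcases hrel b with hsub | hsep
          · exact pairing_nonneg_superset ℓ hsub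
          · exact pairing_nonneg_sep ℓ hsep
      · intro a
        refine Fin.cases ?_ ?_ β
        · simp only [Fin.cons_zero, Fin.cons_succ]
          rcases hrel a with hsub | hsep
          · exact pairing_nonneg_subset ℓ hsub
          · refine pairing_nonneg_sep ℓ ?_
            intro i hi j hj
            obtain ⟨h1, h2, h3⟩ := hsep j hj i hi
            exact ⟨h1.symm, h3, h2⟩
        · intro b
          simp only [Fin.cons_succ]
          exact hIs3 a b
    · intro α
      refine Fin.cases ?_ ?_ α
      · simp only [Fin.cons_zero]
        exact hApos
      · intro a
        simp only [Fin.cons_succ]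
        intro i hi
        have h1 : u' i ≠ 0 := hIs4 a i hi
        have := hdecomp i
        omega

/-- Every `u ∈ ℕ^{Q₀}` over the cyclic quiver of length `ℓ ≥ 1` can be written as a sum of
indicator vectors `e_{I_α}` of nonempty connected subsets with `e_{I_α}·C_Q·e_{I_β} ≥ 0`
for all pairs `α`, `β`. -/
theorem cyclic_decomposition_into_connected_indicators
    (ℓ : ℕ) [NeZero ℓ] (u : ZMod ℓ → ℕ) :
    ∃ (m : ℕ) (Is : Fin m → Finset (ZMod ℓ)),
      (∀ α, (Is α).Nonempty ∧ CyclicConnected ℓ (Is α)) ∧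
      (∀ i, (u i : ℤ) = ∑ α, eInd ℓ (Is α) i) ∧
      (∀ α β, 0 ≤ eInd ℓ (Is α) ⬝ᵥ (cyclicCartan ℓ).mulVec (eInd ℓ (Is β))) := by
  obtain ⟨m, Is, h1, h2, h3, _⟩ := aux_decomp ℓ (∑ i, u i) u rfl
  exact ⟨m, Is, h1, h2, h3⟩

end
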